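/- Let r ≤ m be positive integers and let L be an r×m matrix of integers of full rank r. Suppose A_1, …, A_m are Borel measurable subsets of the circle group T = ℝ/ℤ with S_L(A_1, …, A_m) = 0. Then there exist sets E_1, …, E_m ⊆ T of Haar measure zero such that ((A_1 \ E_1) × ⋯ × (A_m \ E_m)) ∩ ker_T L = ∅; moreover one can take A_i \ E_i to be the set of Lebesgue density points of A_i. -/

import Mathlib

open MeasureTheory Set

noncomputable section

/-- The circle group `𝕋 = ℝ/ℤ`, with its normalized Haar (probability) measure `volume`. -/
abbrev 𝕋 : Type := AddCircle (1 : ℝ)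

/-- The group homomorphism `x ↦ Lx` induced by an integer matrix `L`. -/
def Lhom {r m : ℕ} (L : Matrix (Fin r) (Fin m) ℤ) (G : Type*) [AddCommGroup G] :
    (Fin m → G) →+ (Fin r → G) where
  toFun x := fun i => ∑ j, L i j • x j
  map_zero' := by ext i; simp
  map_add' x y := by ext i; simp [smul_add, Finset.sum_add_distrib]

/-- `ker_𝕋 L`, the closed subgroup `{x ∈ 𝕋^m : Lx = 0}` of `𝕋^m`. -/
def kerT {r m : ℕ} (L : Matrix (Fin r) (Fin m) ℤ) : AddSubgroup (Fin m → 𝕋) :=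
  (Lhom L 𝕋).ker

/-- `a` is a Lebesgue density point of `A ⊆ 𝕋`: the relative measure of `A` in intervals
(balls) shrinking to `a` tends to `1`. -/
def IsDensityPoint (A : Set 𝕋) (a : 𝕋) : Prop :=
  Filter.Tendsto (fun h : ℝ => volume (A ∩ Metric.ball a h) / volume (Metric.ball a h))
    (nhdsWithin 0 (Set.Ioi 0)) (nhds 1)

/-! ### Auxiliary material -/

open Filter
open scoped ENNReal NNReal

set_option synthInstance.maxHeartbeats 1000000

section Aux

/-- The canonical projection `ℝ → 𝕋` as an additive group homomorphism. -/
abbrev mkT : ℝ →+ 𝕋 := QuotientAddGroup.mk' (AddSubgroup.zmultiples (1:ℝ))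

lemma norm_coe_le (v : ℝ) : ‖(v : 𝕋)‖ ≤ |v| := (QuotientAddGroup.norm_mk_le_norm (m := v)).trans_eq (Real.norm_eq_abs v)

lemma exists_rep (x : 𝕋) : ∃ s : ℝ, (s : 𝕋) = x ∧ |s| = ‖x‖ ∧ |s| ≤ 1/2 := by
  obtain ⟨y, rfl⟩ : ∃ y : ℝ, (y : 𝕋) = x := Quotient.exists_rep x
  refine ⟨y - round y, ?_, ?_, abs_sub_round y⟩
  · have h0 : ((round y : ℝ) : 𝕋) = 0 := by
      rw [AddCircle.coe_eq_zero_iff]; exact ⟨round y, by simp⟩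
    rw [QuotientAddGroup.mk_sub, h0, sub_zero]
  · rw [AddCircle.norm_eq]; simp

/-! #### Density points -/

lemma vol_ball_eq_closedBall (a : 𝕋) (h : ℝ) :
    volume (Metric.ball a h) = volume (Metric.closedBall a h) :=
  (measure_congr AddCircle.closedBall_ae_eq_ball).symm

lemma vol_inter_ball_eq (A : Set 𝕋) (a : 𝕋) (h : ℝ) :
    volume (A ∩ Metric.ball a h) = volume (A ∩ Metric.closedBall a h) :=
  measure_congr ((ae_eq_refl A).inter AddCircle.closedBall_ae_eq_ball.symm)

lemma isDensityPoint_iff (A : Set 𝕋) (a : 𝕋) :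
    IsDensityPoint A a ↔ Filter.Tendsto
      (fun h : ℝ => volume (A ∩ Metric.closedBall a h) / volume (Metric.closedBall a h))
      (nhdsWithin 0 (Set.Ioi 0)) (nhds 1) := by
  unfold IsDensityPoint
  have : ∀ h : ℝ, volume (A ∩ Metric.ball a h) / volume (Metric.ball a h)
      = volume (A ∩ Metric.closedBall a h) / volume (Metric.closedBall a h) := by
    intro h; rw [vol_ball_eq_closedBall, vol_inter_ball_eq]
  simp_rw [this]

lemma density_null (A : Set 𝕋) (hA : MeasurableSet A) :
    volume (A \ {a | IsDensityPoint A a}) = 0 := by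
  have H := IsUnifLocDoublingMeasure.ae_tendsto_measure_inter_div (volume : Measure 𝕋) A 1
  have H2 : ∀ᵐ x ∂(volume : Measure 𝕋).restrict A, IsDensityPoint A x := by
    filter_upwards [H] with x hx
    rw [isDensityPoint_iff]
    have := hx (fun _ : ℝ => x) id tendsto_id ?_
    · simpa [Set.inter_comm] using this
    · filter_upwards [self_mem_nhdsWithin] with h (hh : h ∈ Ioi 0)
      exact Metric.mem_closedBall_self (by simpa using le_of_lt hh)
  have := ae_iff.mp H2
  rw [Measure.restrict_apply' hA] at this
  have heq : A \ {a | IsDensityPoint A a} = {a | ¬IsDensityPoint A a} ∩ A := by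
    ext t; simp [Set.mem_diff, and_comm]
  rw [heq]; exact this

lemma vol_ball_le (a : 𝕋) (h : ℝ) : volume (Metric.ball a h) ≤ ENNReal.ofReal (2*h) := by
  refine le_trans (measure_mono Metric.ball_subset_closedBall) ?_
  rw [AddCircle.volume_closedBall 1 h]
  exact ENNReal.ofReal_le_ofReal (min_le_right _ _)

lemma vol_shift (c : 𝕋) (A : Set 𝕋) (h : ℝ) :
    volume (Metric.ball (0:𝕋) h ∩ (fun t => c + t)⁻¹' Aᶜ) = volume (Metric.ball c h \ A) := by
  have : Metric.ball (0:𝕋) h ∩ (fun t => c + t)⁻¹' Aᶜ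
      = (fun t => c + t) ⁻¹' (Metric.ball c h \ A) := by
    ext t
    simp only [mem_inter_iff, Metric.mem_ball, mem_preimage, mem_compl_iff, mem_diff]
    constructor
    · rintro ⟨h1, h2⟩
      refine ⟨?_, h2⟩
      rwa [show dist (c + t) c = dist t 0 by rw [dist_eq_norm, dist_eq_norm]; simp]
    · rintro ⟨h1, h2⟩
      refine ⟨?_, h2⟩
      rwa [show dist t 0 = dist (c + t) c by rw [dist_eq_norm, dist_eq_norm]; simp]
  rw [this, measure_preimage_add]

lemma density_small {A : Set 𝕋} (hA : MeasurableSet A) {a : 𝕋} (hd : IsDensityPoint A a)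
    {ε : ℝ} (hε : 0 < ε) :
    ∀ᶠ h in nhdsWithin (0:ℝ) (Ioi 0), volume (Metric.ball a h \ A) ≤ ENNReal.ofReal (ε * h) := by
  set δ : ℝ := min (ε/2) (1/2) with hδ
  have hδ0 : 0 < δ := by positivity
  have hδ1 : δ ≤ 1/2 := min_le_right _ _
  have hlt : ENNReal.ofReal (1-δ) < 1 := by
    rw [show (1 : ℝ≥0∞) = ENNReal.ofReal 1 by simp]
    exact ENNReal.ofReal_lt_ofReal_iff_of_nonneg (by linarith) |>.mpr (by linarith)
  have hev1 := hd.eventually (eventually_gt_nhds hlt)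
  filter_upwards [hev1, self_mem_nhdsWithin] with h hratio (hh : h ∈ Ioi 0)
  have hh0 : (0:ℝ) < h := hh
  set b := volume (Metric.ball a h) with hb
  have hbound : ENNReal.ofReal (1-δ) * b ≤ volume (A ∩ Metric.ball a h) :=
    (ENNReal.mul_lt_of_lt_div hratio).le
  have hdiff : volume (Metric.ball a h \ A) = b - volume (A ∩ Metric.ball a h) := by
    rw [show Metric.ball a h \ A = Metric.ball a h \ (A ∩ Metric.ball a h) by
      rw [Set.diff_inter_self_eq_diff]]
    exact measure_diff inter_subset_right (hA.inter measurableSet_ball).nullMeasurableSet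
      (measure_ne_top _ _)
  have key : volume (Metric.ball a h \ A) ≤ ENNReal.ofReal δ * b := by
    rw [hdiff, tsub_le_iff_right]
    calc b = 1 * b := (one_mul b).symm
      _ = (ENNReal.ofReal δ + ENNReal.ofReal (1-δ)) * b := by
          rw [← ENNReal.ofReal_add hδ0.le (by linarith), show δ + (1-δ) = 1 by ring]
          simp
      _ = ENNReal.ofReal δ * b + ENNReal.ofReal (1-δ) * b := by ring
      _ ≤ ENNReal.ofReal δ * b + volume (A ∩ Metric.ball a h) := by gcongr
  refine key.trans ?_
  calc ENNReal.ofReal δ * b ≤ ENNReal.ofReal δ * ENNReal.ofReal (2*h) := by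
        gcongr; exact vol_ball_le a h
    _ = ENNReal.ofReal (δ * (2*h)) := by rw [ENNReal.ofReal_mul hδ0.le]
    _ ≤ ENNReal.ofReal (ε * h) := by
        apply ENNReal.ofReal_le_ofReal
        have : δ ≤ ε/2 := min_le_left _ _
        nlinarith

/-! #### The kernel subgroup -/

variable {r m : ℕ} (L : Matrix (Fin r) (Fin m) ℤ)

lemma mem_kerT_iff {z : Fin m → 𝕋} : z ∈ kerT L ↔ ∀ i, ∑ j, L i j • z j = 0 := by
  rw [kerT, AddMonoidHom.mem_ker]
  exact ⟨fun h i => congrFun h i, fun h => funext h⟩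

/-- The real kernel of `L`. -/
def Wker : Submodule ℝ (Fin m → ℝ) :=
  LinearMap.ker (Matrix.mulVecLin (L.map (Int.cast : ℤ → ℝ)))

lemma mem_Wker_iff {w : Fin m → ℝ} :
    w ∈ Wker L ↔ ∀ i, ∑ j, (L i j : ℝ) * w j = 0 := by
  rw [Wker, LinearMap.mem_ker]
  have : (L.map (Int.cast : ℤ → ℝ)).mulVecLin w = fun i => ∑ j, (L i j : ℝ) * w j := by
    funext i
    simp [Matrix.mulVecLin_apply, Matrix.mulVec, dotProduct, Matrix.map_apply]
  rw [this]
  exact ⟨fun h i => congrFun h i, fun h => funext h⟩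

/-- size bound for `L` -/
def CL : ℝ := 1 + ∑ i, ∑ j, |(L i j : ℝ)|

lemma CL_pos : 0 < CL L := by
  have : (0:ℝ) ≤ ∑ i, ∑ j, |(L i j : ℝ)| :=
    Finset.sum_nonneg fun i _ => Finset.sum_nonneg fun j _ => abs_nonneg _
  unfold CL; linarith

lemma row_sum_le (i : Fin r) : ∑ j, |(L i j : ℝ)| ≤ CL L := by
  unfold CL
  have h1 : ∑ j, |(L i j : ℝ)| ≤ ∑ i', ∑ j, |(L i' j : ℝ)| :=
    Finset.single_le_sum (f := fun i' => ∑ j, |(L i' j : ℝ)|)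
      (fun i' _ => Finset.sum_nonneg fun j _ => abs_nonneg _) (Finset.mem_univ i)
  linarith

lemma lift_small {c : ℝ} (hc0 : 0 < c) (hcCL : c * CL L ≤ 1/2)
    (z : kerT L) (hz : ∀ j, ‖(z : Fin m → 𝕋) j‖ < c) :
    ∃ w : Fin m → ℝ, w ∈ Wker L ∧ (∀ j, (w j : 𝕋) = (z : Fin m → 𝕋) j) ∧ ∀ j, |w j| < c := by
  have hrep := fun j => exists_rep ((z : Fin m → 𝕋) j)
  choose w hw1 hw2 _ using hrep
  refine ⟨w, ?_, hw1, fun j => by rw [hw2 j]; exact hz j⟩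
  rw [mem_Wker_iff]
  intro i
  set v : ℝ := ∑ j, (L i j : ℝ) * w j with hv
  have hv0 : (v : 𝕋) = 0 := by
    have h1 : ∀ j, mkT ((L i j : ℝ) * w j) = L i j • ((z : Fin m → 𝕋) j) := by
      intro j
      rw [← zsmul_eq_mul, map_zsmul mkT]
      show (L i j) • ((w j : ℝ) : 𝕋) = _
      rw [hw1 j]
    calc (v : 𝕋) = mkT v := rfl
      _ = ∑ j, mkT ((L i j : ℝ) * w j) := map_sum mkT _ _
      _ = ∑ j, L i j • ((z : Fin m → 𝕋) j) := Finset.sum_congr rfl fun j _ => h1 j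
      _ = 0 := (mem_kerT_iff L).mp z.2 i
  have hvsmall : |v| < 1 := by
    have h2 : |v| ≤ ∑ j, |(L i j : ℝ)| * c := by
      refine (Finset.abs_sum_le_sum_abs _ _).trans (Finset.sum_le_sum fun j _ => ?_)
      rw [abs_mul]
      exact mul_le_mul_of_nonneg_left (by rw [hw2 j]; exact (hz j).le) (abs_nonneg _)
    have h3 : ∑ j, |(L i j : ℝ)| * c ≤ CL L * c := by
      rw [← Finset.sum_mul]
      exact mul_le_mul_of_nonneg_right (row_sum_le L i) hc0.le
    nlinarith [CL_pos L]
  rw [AddCircle.coe_eq_zero_iff] at hv0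
  obtain ⟨n, hn⟩ := hv0
  have hvn : v = (n : ℝ) := by simpa using hn.symm
  rw [hvn] at hvsmall ⊢
  have : n = 0 := by
    have h2 := abs_lt.mp hvsmall
    have : -1 < n ∧ n < 1 := by exact_mod_cast h2
    omega
  simp [this]

/-- coordinatewise coercion `ℝ^m → 𝕋^m` -/
def toT {m : ℕ} (w : Fin m → ℝ) : Fin m → 𝕋 := fun j => (w j : 𝕋)

lemma toT_mem {w : Fin m → ℝ} (hw : w ∈ Wker L) : toT w ∈ kerT L := by
  rw [mem_kerT_iff]
  intro i
  rw [mem_Wker_iff] at hw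
  have h1 : ∀ j, (L i j) • ((w j : ℝ) : 𝕋) = mkT ((L i j : ℝ) * w j) := by
    intro j
    rw [← zsmul_eq_mul]
    exact (map_zsmul mkT _ _).symm
  calc ∑ j, L i j • ((w j : ℝ) : 𝕋) = ∑ j, mkT ((L i j : ℝ) * w j) :=
        Finset.sum_congr rfl fun j _ => h1 j
    _ = mkT (∑ j, (L i j : ℝ) * w j) := (map_sum mkT _ _).symm
    _ = 0 := by rw [hw i]; simp

instance : BorelSpace (kerT L) := Subtype.borelSpace _

/-- small cube neighborhoods of `0` in the kernel -/
def Vset (h : ℝ) : Set (kerT L) := {z | ∀ j, ‖(z : Fin m → 𝕋) j‖ < h}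

lemma isOpen_Vset (h : ℝ) : IsOpen (Vset L h) := by
  have : Vset L h = ⋂ j, (fun z : kerT L => ‖(z : Fin m → 𝕋) j‖) ⁻¹' Iio h := by
    ext z; simp [Vset]
  rw [this]
  exact isOpen_iInter_of_finite fun j =>
    (isOpen_Iio.preimage (continuous_norm.comp ((continuous_apply j).comp continuous_subtype_val)))

lemma measurableSet_Vset (h : ℝ) : MeasurableSet (Vset L h) :=
  (isOpen_Vset L h).measurableSet

lemma zero_mem_Vset {h : ℝ} (h0 : 0 < h) : (0 : kerT L) ∈ Vset L h := by
  intro j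
  show ‖(0 : Fin m → 𝕋) j‖ < h
  simpa using h0

lemma exists_net : ∃ G : Finset (Fin m → ℝ), (∀ w ∈ G, w ∈ Wker L) ∧
    ∀ v ∈ Wker L, ‖v‖ ≤ 2 → ∃ w ∈ G, ‖v - w‖ < 1 := by
  classical
  set K : Set (Fin m → ℝ) := (Wker L : Set (Fin m → ℝ)) ∩ Metric.closedBall 0 2 with hK
  have hKc : IsCompact K := by
    apply (isCompact_closedBall (0 : Fin m → ℝ) 2).inter_left
    exact (Wker L).closed_of_finiteDimensional
  obtain ⟨b, hbK, hbfin, hcov⟩ := hKc.elim_finite_subcover_image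
    (fun w (_ : w ∈ K) => Metric.isOpen_ball (x := w) (ε := 1))
    (fun v hv => mem_iUnion₂.mpr ⟨v, hv, by simp [Metric.mem_ball]⟩)
  refine ⟨hbfin.toFinset, fun w hw => ?_, fun v hv hnorm => ?_⟩
  · exact (hbK (hbfin.mem_toFinset.mp hw)).1
  · have : v ∈ K := ⟨hv, by simpa using hnorm⟩
    obtain ⟨w, hw, hvw⟩ := mem_iUnion₂.mp (hcov this)
    exact ⟨w, hbfin.mem_toFinset.mpr hw, by
      have := Metric.mem_ball.mp hvw
      rwa [dist_eq_norm] at this⟩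

/-- translated copy of `Vset` -/
def Cset (h : ℝ) (w : Fin m → ℝ) : Set (kerT L) :=
  {z | ∀ j, ‖(z : Fin m → 𝕋) j - ((h * w j : ℝ) : 𝕋)‖ < h}

lemma doubling (μ : Measure (kerT L)) (hinv : μ.IsAddLeftInvariant) :
    ∃ N : ℕ, 0 < N ∧ ∀ h : ℝ, 0 < h → 2 * h * CL L ≤ 1/2 →
      μ (Vset L (2*h)) ≤ N * μ (Vset L h) := by
  haveI := hinv
  obtain ⟨G, hGW, hGnet⟩ := exists_net L
  refine ⟨G.card + 1, Nat.succ_pos _, fun h h0 hCL => ?_⟩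
  have key : Vset L (2*h) ⊆ ⋃ w ∈ G, Cset L h w := by
    intro z hz
    obtain ⟨ω, hωW, hωeq, hωsmall⟩ := lift_small L (by linarith) (by linarith) z hz
    have hv : (1/h) • ω ∈ Wker L := (Wker L).smul_mem _ hωW
    have hvnorm : ‖(1/h) • ω‖ ≤ 2 := by
      rw [pi_norm_le_iff_of_nonneg (by norm_num)]
      intro j
      show |(1/h) * ω j| ≤ 2
      rw [abs_mul, abs_of_pos (by positivity : (0:ℝ) < 1/h)]
      rw [div_mul_eq_mul_div, one_mul, div_le_iff₀ h0]
      exact le_of_lt (by linarith [hωsmall j])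
    obtain ⟨w, hwG, hw1⟩ := hGnet _ hv hvnorm
    refine mem_iUnion₂.mpr ⟨w, hwG, fun j => ?_⟩
    have hcoord : |(1/h) * ω j - w j| < 1 := by
      calc |(1/h) * ω j - w j| = ‖((1/h) • ω - w) j‖ := by simp [Real.norm_eq_abs]
        _ ≤ ‖(1/h) • ω - w‖ := norm_le_pi_norm _ j
        _ < 1 := hw1
    have habs : |ω j - h * w j| < h := by
      have heq : ω j - h * w j = h * ((1/h) * ω j - w j) := by field_simp
      rw [heq, abs_mul, abs_of_pos h0]
      nlinarith [hcoord, abs_nonneg ((1/h) * ω j - w j)]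
    calc ‖(z : Fin m → 𝕋) j - ((h * w j : ℝ) : 𝕋)‖
        = ‖((ω j - h * w j : ℝ) : 𝕋)‖ := by
          rw [← hωeq j, QuotientAddGroup.mk_sub]
      _ ≤ |ω j - h * w j| := norm_coe_le _
      _ < h := habs
  calc μ (Vset L (2*h)) ≤ ∑ w ∈ G, μ (Cset L h w) :=
        le_trans (measure_mono key) (measure_biUnion_finset_le G _)
    _ = ∑ _w ∈ G, μ (Vset L h) := by
        refine Finset.sum_congr rfl fun w hwG => ?_
        have hmem : toT (h • w) ∈ kerT L := toT_mem L ((Wker L).smul_mem h (hGW w hwG))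
        have hCeq : Cset L h w
            = (fun z : kerT L => -(⟨toT (h • w), hmem⟩ : kerT L) + z) ⁻¹' Vset L h := by
          ext z
          simp only [Cset, Vset, mem_setOf_eq, mem_preimage]
          constructor
          · intro hh j
            have hc : ((-(⟨toT (h • w), hmem⟩ : kerT L) + z : kerT L) : Fin m → 𝕋) j
                = (z : Fin m → 𝕋) j - ((h * w j : ℝ) : 𝕋) := by
              show (-(toT (h • w)) j + (z : Fin m → 𝕋) j) = _
              simp [toT, sub_eq_add_neg, add_comm, smul_eq_mul]
            rw [hc]; exact hh j
          · intro hh j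
            have h2 := hh j
            rw [show ((-(⟨toT (h • w), hmem⟩ : kerT L) + z : kerT L) : Fin m → 𝕋) j
                = (z : Fin m → 𝕋) j - ((h * w j : ℝ) : 𝕋) from by
              show (-(toT (h • w)) j + (z : Fin m → 𝕋) j) = _
              simp [toT, sub_eq_add_neg, add_comm, smul_eq_mul]] at h2
            exact h2
        rw [hCeq, measure_preimage_add]
    _ = G.card * μ (Vset L h) := by rw [Finset.sum_const, nsmul_eq_mul]
    _ ≤ ((G.card : ℝ≥0∞) + 1) * μ (Vset L h) := by
        gcongr
        exact le_self_add
    _ = ((G.card + 1 : ℕ) : ℝ≥0∞) * μ (Vset L h) := by push_cast; ring_nf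

lemma vol_sub_preimage (c : 𝕋) (B : Set 𝕋) : volume ((fun t => c - t) ⁻¹' B) = volume B := by
  have h1 : (fun t : 𝕋 => c - t) ⁻¹' B = -((fun t : 𝕋 => c + t) ⁻¹' B) := by
    ext t; simp [Set.mem_neg, sub_eq_add_neg, add_comm]
  rw [h1, Measure.measure_neg, measure_preimage_add]

lemma slice_bound (c : 𝕋) {B : Set 𝕋} (hB : MeasurableSet B) {τ : ℝ} (hτ1 : τ ≤ 1) :
    volume {s : ℝ | s ∈ Icc 0 τ ∧ c - (s : 𝕋) ∈ B} ≤ volume B := by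
  set E : Set 𝕋 := (fun t : 𝕋 => c - t) ⁻¹' B with hE
  have hEmeas : MeasurableSet E := hB.preimage (by fun_prop)
  have hsub : {s : ℝ | s ∈ Icc 0 τ ∧ c - (s : 𝕋) ∈ B}
      ⊆ {(0:ℝ)} ∪ ((QuotientAddGroup.mk ⁻¹' E) ∩ Ioc (0:ℝ) (0+1)) := by
    rintro s ⟨⟨hs0, hsτ⟩, hsB⟩
    rcases eq_or_lt_of_le hs0 with heq | hlt
    · exact Or.inl (by simp [← heq])
    · exact Or.inr ⟨hsB, hlt, by linarith⟩
  calc volume {s : ℝ | s ∈ Icc 0 τ ∧ c - (s : 𝕋) ∈ B}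
      ≤ volume ({(0:ℝ)} : Set ℝ) + volume ((QuotientAddGroup.mk ⁻¹' E) ∩ Ioc (0:ℝ) (0+1)) :=
        le_trans (measure_mono hsub) (measure_union_le _ _)
    _ = volume E := by
        rw [Real.volume_singleton, zero_add,
          ← AddCircle.add_projection_respects_measure 1 0 hEmeas]
    _ = volume B := vol_sub_preimage c B

lemma slab (μ : Measure (kerT L)) (hinv : μ.IsAddLeftInvariant) (hfin : IsFiniteMeasure μ)
    (i : Fin m) (u : Fin m → ℝ) (hu : u ∈ Wker L) (hui : u i = 1)
    {h τ : ℝ} (hτ0 : 0 < τ) (hτ1 : τ ≤ 1) (hbnd : ∀ j, τ * |u j| ≤ h)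
    {B : Set 𝕋} (hB : MeasurableSet B) :
    ENNReal.ofReal τ * μ {z : kerT L | z ∈ Vset L h ∧ (z : Fin m → 𝕋) i ∈ B}
      ≤ volume B * μ (Vset L (2*h)) := by
  haveI := hinv; haveI := hfin
  haveI : SFinite μ := inferInstance
  classical
  set base := {z : kerT L | z ∈ Vset L h ∧ (z : Fin m → 𝕋) i ∈ B} with hbase
  set D : ℝ → Set (kerT L) := fun s => {z : kerT L | z ∈ Vset L (2*h) ∧
    (z : Fin m → 𝕋) i - (s : 𝕋) ∈ B} with hD
  have hDmeas : ∀ s, MeasurableSet (D s) := by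
    intro s
    exact (measurableSet_Vset L (2*h)).inter
      ((((continuous_apply i).comp continuous_subtype_val).sub continuous_const).measurable hB)
  have step1 : ∀ s ∈ Icc (0:ℝ) τ, μ base ≤ μ (D s) := by
    rintro s ⟨hs0, hsτ⟩
    have hsu : s • u ∈ Wker L := (Wker L).smul_mem s hu
    set gs : kerT L := ⟨toT (s • u), toT_mem L hsu⟩ with hgs
    have hsub : base ⊆ (fun z => z + gs) ⁻¹' (D s) := by
      rintro y ⟨hyV, hyB⟩
      have hcoord : ∀ j, ((y + gs : kerT L) : Fin m → 𝕋) j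
          = (y : Fin m → 𝕋) j + ((s * u j : ℝ) : 𝕋) := fun j => rfl
      constructor
      · intro j
        rw [hcoord j]
        calc ‖(y : Fin m → 𝕋) j + ((s * u j : ℝ) : 𝕋)‖
            ≤ ‖(y : Fin m → 𝕋) j‖ + ‖((s * u j : ℝ) : 𝕋)‖ := norm_add_le _ _
          _ ≤ ‖(y : Fin m → 𝕋) j‖ + |s * u j| := by linarith [norm_coe_le (s * u j)]
          _ < h + h := by
              have h1 : |s * u j| ≤ τ * |u j| := by
                rw [abs_mul]
                exact mul_le_mul_of_nonneg_right (abs_le.mpr ⟨by linarith, hsτ⟩) (abs_nonneg _)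
              have h2 := hbnd j
              have h3 := hyV j
              linarith
          _ = 2*h := by ring
      · show ((y + gs : kerT L) : Fin m → 𝕋) i - (s : 𝕋) ∈ B
        rw [hcoord i, hui, mul_one]
        simpa using hyB
    have hcomm : (fun z : kerT L => z + gs) = (fun z => gs + z) :=
      funext fun z => add_comm z gs
    calc μ base ≤ μ ((fun z => z + gs) ⁻¹' (D s)) := measure_mono hsub
      _ = μ (D s) := by rw [hcomm, measure_preimage_add]
  set f : ℝ → kerT L → ℝ≥0∞ := fun s z => (D s).indicator 1 z with hf
  have hfmeas : Measurable (Function.uncurry f) := by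
    have huncurry : Function.uncurry f = ({p : ℝ × kerT L |
        p.2 ∈ Vset L (2*h) ∧ ((p.2 : Fin m → 𝕋) i - (p.1 : 𝕋)) ∈ B}).indicator 1 := by
      funext p
      simp only [Function.uncurry, hf, Set.indicator_apply, hD]
      rfl
    rw [huncurry]
    apply measurable_one.indicator
    apply MeasurableSet.inter
    · exact measurable_snd (measurableSet_Vset L (2*h))
    · apply MeasurableSet.preimage hB
      apply Continuous.measurable
      exact (((continuous_apply i).comp continuous_subtype_val).comp continuous_snd).sub
        ((AddCircle.continuous_mk' 1).comp continuous_fst)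
  have hDf : ∀ s, μ (D s) = ∫⁻ z, f s z ∂μ := fun s =>
    (lintegral_indicator_one (hDmeas s)).symm
  have step2 : ENNReal.ofReal τ * μ base ≤ ∫⁻ s in Icc (0:ℝ) τ, μ (D s) ∂volume := by
    have hμD : Measurable fun s => μ (D s) := by
      have heq : (fun s => μ (D s)) = fun s => ∫⁻ z, f s z ∂μ := funext hDf
      rw [heq]
      exact hfmeas.lintegral_prod_right'
    calc ENNReal.ofReal τ * μ base = μ base * volume (Icc (0:ℝ) τ) := by
          rw [Real.volume_Icc, mul_comm]
          congr 2
          linarith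
      _ = ∫⁻ _ in Icc (0:ℝ) τ, μ base ∂volume := (setLIntegral_const _ _).symm
      _ ≤ ∫⁻ s in Icc (0:ℝ) τ, μ (D s) ∂volume := setLIntegral_mono hμD step1
  have step3 : ∫⁻ s in Icc (0:ℝ) τ, μ (D s) ∂volume ≤ volume B * μ (Vset L (2*h)) := by
    have hswap : ∫⁻ s in Icc (0:ℝ) τ, ∫⁻ z, f s z ∂μ ∂volume
        = ∫⁻ z, ∫⁻ s in Icc (0:ℝ) τ, f s z ∂volume ∂μ :=
      lintegral_lintegral_swap hfmeas.aemeasurable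
    have hinner : ∀ z : kerT L, (∫⁻ s in Icc (0:ℝ) τ, f s z ∂volume)
        ≤ (Vset L (2*h)).indicator (fun _ => volume B) z := by
      intro z
      by_cases hz : z ∈ Vset L (2*h)
      · have heq : ∀ s : ℝ, f s z
            = ({s' : ℝ | (z : Fin m → 𝕋) i - (s' : 𝕋) ∈ B}).indicator 1 s := by
          intro s
          simp only [hf, hD, Set.indicator_apply, mem_setOf_eq]
          congr 1
          simp only [eq_iff_iff]
          exact ⟨fun hp => hp.2, fun hp => ⟨hz, hp⟩⟩
        have hSmeas : MeasurableSet {s' : ℝ | (z : Fin m → 𝕋) i - (s' : 𝕋) ∈ B} := by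
          apply MeasurableSet.preimage hB
          exact (continuous_const.sub (AddCircle.continuous_mk' 1)).measurable
        calc (∫⁻ s in Icc (0:ℝ) τ, f s z ∂volume)
            = ∫⁻ s in Icc (0:ℝ) τ,
                ({s' : ℝ | (z : Fin m → 𝕋) i - (s' : 𝕋) ∈ B}).indicator 1 s ∂volume := by
              simp_rw [heq]
          _ = volume ({s' : ℝ | (z : Fin m → 𝕋) i - (s' : 𝕋) ∈ B} ∩ Icc (0:ℝ) τ) := by
              rw [lintegral_indicator_one hSmeas, Measure.restrict_apply hSmeas]
          _ ≤ volume B := by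
              refine le_trans (measure_mono ?_) (slice_bound ((z : Fin m → 𝕋) i) hB hτ1)
              rintro s ⟨hs1, hs2⟩
              exact ⟨hs2, hs1⟩
          _ = (Vset L (2*h)).indicator (fun _ => volume B) z := by
              rw [Set.indicator_of_mem hz]
      · have heq : ∀ s : ℝ, f s z = 0 := by
          intro s
          simp only [hf]
          apply Set.indicator_of_notMem
          intro hmem
          exact hz hmem.1
        simp_rw [heq]
        simp
    calc ∫⁻ s in Icc (0:ℝ) τ, μ (D s) ∂volume
        = ∫⁻ s in Icc (0:ℝ) τ, ∫⁻ z, f s z ∂μ ∂volume := by simp_rw [hDf]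
      _ = ∫⁻ z, ∫⁻ s in Icc (0:ℝ) τ, f s z ∂volume ∂μ := hswap
      _ ≤ ∫⁻ z, (Vset L (2*h)).indicator (fun _ => volume B) z ∂μ := lintegral_mono hinner
      _ = volume B * μ (Vset L (2*h)) := by
          rw [lintegral_indicator_const (measurableSet_Vset L (2*h))]
  exact le_trans step2 step3

end Aux

/-- **Removal of solutions for sets with zero solution measure.**
If `L` is an `r × m` integer matrix of full rank `r` (with `0 < r ≤ m`), `μL` is the
normalized Haar probability measure on `ker_𝕋 L`, and `A₁, …, A_m` are Borel subsets of
`𝕋` with `S_L(A₁, …, A_m) = 0`, then there are null sets `E₁, …, E_m ⊆ 𝕋` with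
`((A₁ \ E₁) × ⋯ × (A_m \ E_m)) ∩ ker_𝕋 L = ∅`; moreover one can take `A_i \ E_i` to be
the set of Lebesgue density points of `A_i` (that lie in `A_i`). -/
theorem zero_removal_circle {r m : ℕ} (hr : 0 < r) (hrm : r ≤ m)
    (L : Matrix (Fin r) (Fin m) ℤ)
    (hrank : (L.map (Int.cast : ℤ → ℚ)).rank = r)
    (μL : Measure (kerT L)) (hHaar : μL.IsAddHaarMeasure) (hprob : IsProbabilityMeasure μL)
    (A : Fin m → Set 𝕋) (hA : ∀ i, MeasurableSet (A i))
    (hzero : μL {x : kerT L | ∀ i, (x : Fin m → 𝕋) i ∈ A i} = 0) :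
    ∃ E : Fin m → Set 𝕋,
      (∀ i, volume (E i) = 0) ∧
      (∀ i, A i \ E i = {a ∈ A i | IsDensityPoint (A i) a}) ∧
      ∀ x : kerT L, ¬ (∀ i, (x : Fin m → 𝕋) i ∈ A i \ E i) := by
  classical
  haveI := hHaar
  haveI := hprob
  refine ⟨fun i => A i \ {a | IsDensityPoint (A i) a}, fun i => density_null (A i) (hA i),
    fun i => ?_, ?_⟩
  · ext t
    simp only [mem_diff, mem_setOf_eq, mem_sep_iff]
    tauto
  · intro x hx
    have hxA : ∀ i, (x : Fin m → 𝕋) i ∈ A i := fun i => (hx i).1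
    have hxD : ∀ i, IsDensityPoint (A i) ((x : Fin m → 𝕋) i) := by
      intro i
      have h2 := (hx i).2
      simp only [mem_diff, mem_setOf_eq, not_and, not_not] at h2
      exact h2 (hxA i)
    -- choice of direction vectors
    have hchoice : ∀ i : Fin m, (∃ v, v ∈ Wker L ∧ v i = 1) ∨ (∀ w ∈ Wker L, w i = 0) := by
      intro i
      by_cases hc : ∀ w ∈ Wker L, w i = 0
      · exact Or.inr hc
      · push_neg at hc
        obtain ⟨w, hwW, hwi⟩ := hc
        refine Or.inl ⟨(w i)⁻¹ • w, (Wker L).smul_mem _ hwW, ?_⟩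
        show (w i)⁻¹ * w i = 1
        field_simp
    set u : Fin m → (Fin m → ℝ) := fun i =>
      if hc : ∃ v, v ∈ Wker L ∧ v i = 1 then hc.choose else 0 with hu
    have hu_spec : ∀ i, (∃ v, v ∈ Wker L ∧ v i = 1) → u i ∈ Wker L ∧ u i i = 1 := by
      intro i hcase
      simp only [hu, dif_pos hcase]
      exact hcase.choose_spec
    set c : ℝ := 1 + ∑ i, ∑ j, |u i j| with hc
    have hsum_nonneg : (0:ℝ) ≤ ∑ i, ∑ j, |u i j| :=
      Finset.sum_nonneg fun i _ => Finset.sum_nonneg fun j _ => abs_nonneg _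
    have hc1 : 1 ≤ c := by rw [hc]; linarith
    have hc0 : 0 < c := by linarith
    have hcu : ∀ i j, |u i j| ≤ c := by
      intro i j
      have h1 : |u i j| ≤ ∑ j', |u i j'| :=
        Finset.single_le_sum (fun j' _ => abs_nonneg (u i j')) (Finset.mem_univ j)
      have h2 : ∑ j', |u i j'| ≤ ∑ i', ∑ j', |u i' j'| :=
        Finset.single_le_sum (f := fun i' => ∑ j', |u i' j'|)
          (fun i' _ => Finset.sum_nonneg fun j' _ => abs_nonneg _) (Finset.mem_univ i)
      rw [hc]; linarith
    obtain ⟨N, hN0, hdouble⟩ := doubling L μL inferInstance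
    set ε : ℝ := 1 / (2 * c * ((m:ℝ) * (N:ℝ) + 1)) with hε
    have hε0 : 0 < ε := by positivity
    -- choose a good small h
    have hev : ∀ᶠ h in nhdsWithin (0:ℝ) (Ioi 0),
        ((0 < h ∧ h ≤ 1) ∧ 2*h*CL L ≤ 1/2) ∧
        ∀ i, volume (Metric.ball ((x : Fin m → 𝕋) i) h \ A i) ≤ ENNReal.ofReal (ε*h) := by
      apply Filter.Eventually.and
      · have hIio : Iio (min 1 (1/(8*CL L))) ∈ nhdsWithin (0:ℝ) (Ioi 0) := by
          apply nhdsWithin_le_nhds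
          apply Iio_mem_nhds
          have := CL_pos L
          positivity
        filter_upwards [hIio, self_mem_nhdsWithin] with h hlt (hh : h ∈ Ioi 0)
        have hh0 : (0:ℝ) < h := hh
        have h1 : h < 1 := lt_of_lt_of_le hlt (min_le_left _ _)
        have h2 : h < 1/(8*CL L) := lt_of_lt_of_le hlt (min_le_right _ _)
        have hCL := CL_pos L
        refine ⟨⟨hh0, h1.le⟩, ?_⟩
        rw [lt_div_iff₀ (by positivity)] at h2
        nlinarith
      · rw [eventually_all]
        exact fun i => density_small (hA i) (hxD i) hε0
    obtain ⟨h, ⟨⟨hh0, hh1⟩, hhCL⟩, hsmall⟩ := hev.exists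
    -- the bad sets
    set Bset : Fin m → Set 𝕋 := fun i =>
      Metric.ball (0:𝕋) h ∩ (fun t => (x : Fin m → 𝕋) i + t) ⁻¹' (A i)ᶜ with hBset
    have hBmeas : ∀ i, MeasurableSet (Bset i) := fun i =>
      measurableSet_ball.inter
        (((continuous_const.add continuous_id).measurable) (hA i).compl)
    set bad : Fin m → Set (kerT L) := fun i =>
      {z : kerT L | z ∈ Vset L h ∧ (z : Fin m → 𝕋) i ∈ Bset i} with hbad
    -- covering
    have hSol : μL ((fun z : kerT L => x + z) ⁻¹'
        {z : kerT L | ∀ i, (z : Fin m → 𝕋) i ∈ A i}) = 0 := by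
      rw [measure_preimage_add]; exact hzero
    have hcover : Vset L h ⊆ ((fun z : kerT L => x + z) ⁻¹'
        {z : kerT L | ∀ i, (z : Fin m → 𝕋) i ∈ A i}) ∪ ⋃ i, bad i := by
      intro z hz
      by_cases hall : ∀ i, (x : Fin m → 𝕋) i + (z : Fin m → 𝕋) i ∈ A i
      · exact Or.inl hall
      · right
        push_neg at hall
        obtain ⟨i, hi⟩ := hall
        refine mem_iUnion.mpr ⟨i, hz, ?_, hi⟩
        rw [Metric.mem_ball, dist_zero_right]
        exact hz i
    have hsum : μL (Vset L h) ≤ ∑ i, μL (bad i) := by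
      calc μL (Vset L h)
          ≤ μL (((fun z : kerT L => x + z) ⁻¹'
              {z : kerT L | ∀ i, (z : Fin m → 𝕋) i ∈ A i}) ∪ ⋃ i, bad i) :=
            measure_mono hcover
        _ ≤ μL ((fun z : kerT L => x + z) ⁻¹'
              {z : kerT L | ∀ i, (z : Fin m → 𝕋) i ∈ A i}) + μL (⋃ i, bad i) :=
            measure_union_le _ _
        _ = μL (⋃ i, bad i) := by rw [hSol, zero_add]
        _ ≤ ∑' i, μL (bad i) := measure_iUnion_le _
        _ = ∑ i, μL (bad i) := tsum_fintype _
    -- per-coordinate bound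
    have hper : ∀ i, ENNReal.ofReal (h/c) * μL (bad i)
        ≤ ENNReal.ofReal (ε*h) * ((N:ℝ≥0∞) * μL (Vset L h)) := by
      intro i
      rcases hchoice i with hcase | hdeg
      · obtain ⟨huW, hui⟩ := hu_spec i hcase
        have hτ0 : 0 < h/c := by positivity
        have hτ1 : h/c ≤ 1 := by
          rw [div_le_one hc0]; linarith
        have hbnd : ∀ j, (h/c) * |u i j| ≤ h := by
          intro j
          calc (h/c) * |u i j| ≤ (h/c) * c := by
                have := hcu i j
                gcongr
            _ = h := by field_simp
        have hslab := slab L μL inferInstance inferInstance i (u i) huW hui hτ0 hτ1 hbnd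
          (hBmeas i)
        calc ENNReal.ofReal (h/c) * μL (bad i)
            ≤ volume (Bset i) * μL (Vset L (2*h)) := hslab
          _ ≤ ENNReal.ofReal (ε*h) * ((N:ℝ≥0∞) * μL (Vset L h)) := by
              gcongr
              · rw [hBset]
                rw [vol_shift ((x : Fin m → 𝕋) i) (A i) h]
                exact hsmall i
              · exact hdouble h hh0 hhCL
      · have hempty : bad i = ∅ := by
          ext z
          simp only [hbad, mem_setOf_eq, mem_empty_iff_false, iff_false, not_and]
          intro hzV hzB
          obtain ⟨w, hwW, hweq, _⟩ := lift_small L hh0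
            (by nlinarith [CL_pos L]) z hzV
          have hzi : (z : Fin m → 𝕋) i = 0 := by
            rw [← hweq i, hdeg w hwW]
            simp
          obtain ⟨_, hB2⟩ := hzB
          apply hB2
          show (x : Fin m → 𝕋) i + (z : Fin m → 𝕋) i ∈ A i
          rw [hzi, add_zero]
          exact hxA i
        rw [hempty]
        simp
    -- combine
    have hVpos : 0 < μL (Vset L h) :=
      (isOpen_Vset L h).measure_pos μL ⟨0, zero_mem_Vset L hh0⟩
    have hVfin : μL (Vset L h) ≠ ⊤ := measure_ne_top _ _
    have hmain : ENNReal.ofReal (h/c) * μL (Vset L h)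
        ≤ ((m:ℝ≥0∞) * (N:ℝ≥0∞) * ENNReal.ofReal (ε*h)) * μL (Vset L h) := by
      calc ENNReal.ofReal (h/c) * μL (Vset L h)
          ≤ ENNReal.ofReal (h/c) * ∑ i, μL (bad i) := by gcongr
        _ = ∑ i, ENNReal.ofReal (h/c) * μL (bad i) := Finset.mul_sum _ _ _
        _ ≤ ∑ _i : Fin m, ENNReal.ofReal (ε*h) * ((N:ℝ≥0∞) * μL (Vset L h)) :=
            Finset.sum_le_sum fun i _ => hper i
        _ = (m:ℝ≥0∞) * (ENNReal.ofReal (ε*h) * ((N:ℝ≥0∞) * μL (Vset L h))) := by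
            rw [Finset.sum_const, Finset.card_univ, Fintype.card_fin, nsmul_eq_mul]
        _ = ((m:ℝ≥0∞) * (N:ℝ≥0∞) * ENNReal.ofReal (ε*h)) * μL (Vset L h) := by ring
    have hfinal : ENNReal.ofReal (h/c) ≤ (m:ℝ≥0∞) * (N:ℝ≥0∞) * ENNReal.ofReal (ε*h) :=
      (ENNReal.mul_le_mul_iff_left hVpos.ne' hVfin).mp hmain
    have hreal : h/c ≤ (m:ℝ) * (N:ℝ) * (ε*h) := by
      have hcast : (m:ℝ≥0∞) * (N:ℝ≥0∞) * ENNReal.ofReal (ε*h)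
          = ENNReal.ofReal ((m:ℝ) * (N:ℝ) * (ε*h)) := by
        rw [← ENNReal.ofReal_natCast m, ← ENNReal.ofReal_natCast N,
          ← ENNReal.ofReal_mul (by positivity), ← ENNReal.ofReal_mul (by positivity)]
      rw [hcast] at hfinal
      exact (ENNReal.ofReal_le_ofReal_iff (by positivity)).mp hfinal
    -- contradiction
    have hcontra : (1:ℝ)/c ≤ (m:ℝ) * (N:ℝ) * ε := by
      have h3 : h * (1/c) ≤ h * ((m:ℝ) * (N:ℝ) * ε) := by
        calc h * (1/c) = h/c := by ring
          _ ≤ (m:ℝ) * (N:ℝ) * (ε*h) := hreal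
          _ = h * ((m:ℝ) * (N:ℝ) * ε) := by ring
      exact le_of_mul_le_mul_left h3 hh0
    rw [hε] at hcontra
    set R : ℝ := (m:ℝ) * (N:ℝ) with hR
    have hR0 : 0 ≤ R := by positivity
    have hfc : (1:ℝ)/c ≤ R * (1 / (2 * c * (R + 1))) := hcontra
    have hne : (0:ℝ) < 2 * c * (R + 1) := by positivity
    rw [mul_one_div, div_le_div_iff₀ hc0 hne] at hfc
    nlinarith
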